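/- arXiv:2410.16280 — 2 statements merged into one kernel-verified Lean document; each statement's English description precedes it below -/
import Mathlib

section
/- Let M be a positive integer, let K ⊆ ℝ^M be a nonempty compact set, let F : ℝ^M → ℝ be continuous, let a ∈ ℝ^M, and suppose u* ∈ K is the unique maximizer of u ↦ ⟨a, u⟩ over K (i.e., ⟨a, u⟩ < ⟨a, u*⟩ for all u ∈ K with u ≠ u*). Then for every open neighborhood V of u* there exists ν₀ ∈ ℝ such that for all ν ≥ ν₀, every maximizer over K of the function u ↦ F(u) + ν·⟨a, u⟩ lies in V. -/
open scoped RealInnerProductSpace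

/-- If `uStar ∈ K` is the unique (strict) maximizer of `u ↦ ⟨a, u⟩` over the
nonempty compact set `K`, and `F` is continuous, then for every open neighborhood `V` of
`uStar` there is `ν₀` such that for all `ν ≥ ν₀`, every maximizer over `K` of
`u ↦ F u + ν⟨a, u⟩` lies in `V`. -/
theorem stmt_6 (M : ℕ) (hM : 0 < M) (K : Set (EuclideanSpace ℝ (Fin M)))
    (hKne : K.Nonempty) (hKcp : IsCompact K)
    (F : EuclideanSpace ℝ (Fin M) → ℝ) (hF : Continuous F)
    (a : EuclideanSpace ℝ (Fin M))
    (uStar : EuclideanSpace ℝ (Fin M)) (huK : uStar ∈ K)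
    (hstrict : ∀ u ∈ K, u ≠ uStar → ⟪a, u⟫ < ⟪a, uStar⟫) :
    ∀ V : Set (EuclideanSpace ℝ (Fin M)), IsOpen V → uStar ∈ V →
      ∃ ν₀ : ℝ, ∀ ν : ℝ, ν₀ ≤ ν →
        ∀ v ∈ K, (∀ u ∈ K, F u + ν * ⟪a, u⟫ ≤ F v + ν * ⟪a, v⟫) → v ∈ V := by
  intro V hV hVmem
  by_cases hsub : K ⊆ V
  · exact ⟨0, fun ν _ v hv _ => hsub hv⟩
  · have hScp : IsCompact (K \ V) := by
      rw [Set.diff_eq]; exact hKcp.inter_right hV.isClosed_compl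
    have hSne : (K \ V).Nonempty := by
      rcases Set.not_subset.mp hsub with ⟨x, hxK, hxV⟩
      exact ⟨x, hxK, hxV⟩
    have hcont : Continuous fun u : EuclideanSpace ℝ (Fin M) => ⟪a, u⟫ :=
      continuous_const.inner continuous_id
    obtain ⟨u', hu'S, hu'max⟩ := hScp.exists_isMaxOn hSne hcont.continuousOn
    have hu'K : u' ∈ K := hu'S.1
    have hu'ne : u' ≠ uStar := fun h => hu'S.2 (h ▸ hVmem)
    have hδ : 0 < ⟪a, uStar⟫ - ⟪a, u'⟫ := by
      have := hstrict u' hu'K hu'ne; linarith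
    obtain ⟨C, hC⟩ := hKcp.exists_bound_of_continuousOn hF.continuousOn
    have hC0 : 0 ≤ C := le_trans (norm_nonneg _) (hC uStar huK)
    set δ := ⟪a, uStar⟫ - ⟪a, u'⟫ with hδdef
    refine ⟨2 * C / δ + 1, fun ν hν v hvK hvmax => ?_⟩
    by_contra hvV
    have hvS : v ∈ K \ V := ⟨hvK, hvV⟩
    have h1 : ⟪a, v⟫ ≤ ⟪a, u'⟫ := hu'max hvS
    have h2 : F uStar + ν * ⟪a, uStar⟫ ≤ F v + ν * ⟪a, v⟫ := hvmax uStar huK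
    have hFv : ‖F v‖ ≤ C := hC v hvK
    have hFu : ‖F uStar‖ ≤ C := hC uStar huK
    rw [Real.norm_eq_abs, abs_le] at hFv hFu
    have hν0 : 0 < ν := by
      have : 0 ≤ 2 * C / δ := div_nonneg (by linarith) hδ.le
      linarith
    have key : ν * δ ≤ 2 * C := by
      have : ν * (⟪a, uStar⟫ - ⟪a, v⟫) ≤ F v - F uStar := by ring_nf; ring_nf at h2; linarith
      have h3 : ν * δ ≤ ν * (⟪a, uStar⟫ - ⟪a, v⟫) := by
        apply mul_le_mul_of_nonneg_left (by linarith) hν0.le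
      linarith
    have hd : 2 * C / δ * δ = 2 * C := div_mul_cancel₀ _ hδ.ne'
    nlinarith [mul_le_mul_of_nonneg_right hν hδ.le]
end

section
/- Let M be a positive integer, let K ⊆ ℝ^M be a nonempty compact set, let Q be a real M×M matrix, let q, a, L ∈ ℝ^M, let d : ℝ^M → ℝ^M be continuous, and define c(u, ν) = ⟨u, Q u⟩ + ⟨q, u⟩ + ν·⟨a, u⟩ + ⟨L, d(u)⟩. Suppose u* ∈ K is the unique maximizer of u ↦ ⟨a, u⟩ over K, and let u^c : ℝ → ℝ^M be any function such that for every ν, u^c(ν) ∈ K and u^c(ν) maximizes u ↦ c(u, ν) over K. Then u^c(ν) → u* as ν → ∞. -/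
open scoped RealInnerProductSpace Matrix
open Filter

/-- Lemma 2 of the paper: with capability
`c(u, ν) = ⟨u, Q u⟩ + ⟨q, u⟩ + ν⟨a, u⟩ + ⟨L, d u⟩`, if `uStar` is the unique maximizer
of `⟨a, ·⟩` over the nonempty compact set `K` and `uc ν` maximizes `c(·, ν)` over `K`
for every `ν`, then `uc ν → uStar` as `ν → ∞`. -/
theorem stmt_7 (M : ℕ) (hM : 0 < M) (K : Set (EuclideanSpace ℝ (Fin M)))
    (hKne : K.Nonempty) (hKcp : IsCompact K)
    (Q : Matrix (Fin M) (Fin M) ℝ) (q a L : EuclideanSpace ℝ (Fin M))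
    (d : EuclideanSpace ℝ (Fin M) → EuclideanSpace ℝ (Fin M)) (hd : Continuous d)
    (c : EuclideanSpace ℝ (Fin M) → ℝ → ℝ)
    (hc : ∀ u ν, c u ν = (u : Fin M → ℝ) ⬝ᵥ Q.mulVec u + ⟪q, u⟫ + ν * ⟪a, u⟫ + ⟪L, d u⟫)
    (uStar : EuclideanSpace ℝ (Fin M)) (huK : uStar ∈ K)
    (hmax : ∀ u ∈ K, ⟪a, u⟫ ≤ ⟪a, uStar⟫)
    (hstrict : ∀ u ∈ K, u ≠ uStar → ⟪a, u⟫ < ⟪a, uStar⟫)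
    (uc : ℝ → EuclideanSpace ℝ (Fin M))
    (hucK : ∀ ν, uc ν ∈ K)
    (hucmax : ∀ ν, ∀ u ∈ K, c u ν ≤ c (uc ν) ν) :
    Tendsto uc atTop (nhds uStar) := by
  -- the ν-independent part of c
  set g : EuclideanSpace ℝ (Fin M) → ℝ :=
    fun u => (u : Fin M → ℝ) ⬝ᵥ Q.mulVec u + ⟪q, u⟫ + ⟪L, d u⟫ with hg
  have hcg : ∀ u ν, c u ν = g u + ν * ⟪a, u⟫ := by
    intro u ν; rw [hc]; simp [hg]; ring
  have hgc : Continuous g := by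
    have hcoer : Continuous fun u : EuclideanSpace ℝ (Fin M) => (u : Fin M → ℝ) :=
      PiLp.continuous_ofLp 2 _
    have h1 : Continuous fun u : EuclideanSpace ℝ (Fin M) =>
        (u : Fin M → ℝ) ⬝ᵥ Q.mulVec u := by
      simp only [dotProduct, Matrix.mulVec]
      exact continuous_finset_sum _ fun i _ =>
        ((continuous_apply i).comp hcoer).mul
          (continuous_finset_sum _ fun j _ =>
            continuous_const.mul ((continuous_apply j).comp hcoer))
    exact (h1.add (continuous_const.inner continuous_id)).add
      (continuous_const.inner hd)
  -- bound for g on K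
  obtain ⟨B, hB⟩ := hKcp.exists_bound_of_continuousOn hgc.continuousOn
  have hB0 : 0 ≤ B := le_trans (norm_nonneg _) (hB _ huK)
  have key : ∀ ν : ℝ, ν * (⟪a, uStar⟫ - ⟪a, uc ν⟫) ≤ 2 * B := by
    intro ν
    have h := hucmax ν uStar huK
    rw [hcg, hcg] at h
    have h1 : ν * ⟪a, uStar⟫ - ν * ⟪a, uc ν⟫ ≤ g (uc ν) - g uStar := by linarith
    have h2 : ‖g (uc ν)‖ ≤ B := hB _ (hucK ν)
    have h3 : ‖g uStar‖ ≤ B := hB _ huK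
    rw [Real.norm_eq_abs, abs_le] at h2 h3
    nlinarith [h2.1, h2.2, h3.1, h3.2]
  rw [Metric.tendsto_atTop]
  intro ε hε
  set S := K ∩ (Metric.ball uStar ε)ᶜ with hS
  have hScp : IsCompact S := hKcp.inter_right Metric.isOpen_ball.isClosed_compl
  rcases S.eq_empty_or_nonempty with hSe | hSne
  · refine ⟨0, fun ν _ => ?_⟩
    by_contra h
    have : uc ν ∈ S := ⟨hucK ν, by simpa [Metric.mem_ball] using h⟩
    simp [hSe] at this
  · obtain ⟨u0, hu0S, hu0max⟩ := hScp.exists_isMaxOn hSne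
      ((continuous_const.inner continuous_id (𝕜 := ℝ)).continuousOn)
    have hu0ne : u0 ≠ uStar := by
      intro h
      have := hu0S.2
      simp [h, Metric.mem_ball, hε] at this
    have hδ : 0 < ⟪a, uStar⟫ - ⟪a, u0⟫ := by
      have := hstrict u0 hu0S.1 hu0ne
      linarith
    refine ⟨(2 * B + 1) / (⟪a, uStar⟫ - ⟪a, u0⟫), fun ν hν => ?_⟩
    by_contra h
    have hucS : uc ν ∈ S := ⟨hucK ν, by simpa [Metric.mem_ball] using h⟩
    have hle : ⟪a, uc ν⟫ ≤ ⟪a, u0⟫ := hu0max hucS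
    have hν' : ν * (⟪a, uStar⟫ - ⟪a, u0⟫) ≥ 2 * B + 1 := by
      rw [ge_iff_le, ← div_le_iff₀ hδ] at *
      linarith [hν]
    have := key ν
    have hνpos : 0 < ν := by
      rcases lt_or_ge 0 ν with h' | h'
      · exact h'
      · exfalso; nlinarith [mul_nonpos_of_nonpos_of_nonneg h' hδ.le]
    nlinarith
end
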